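/- arXiv:2104.08764 — 2 statements merged into one kernel-verified Lean document; each statement's English description precedes it below -/
import Mathlib

section
/- Let A be a positive definite symmetric d×d real matrix and G_0 a symmetric matrix with G_0 ⪰ A. Suppose sequences (G_k), (L_k), (ũ_k) satisfy for every k ≥ 0: L_k is an invertible d×d matrix with L_kᵀ L_k = G_k⁻¹; ũ_k is a standard basis vector maximizing eᵀ L_k⁻ᵀ A⁻¹ L_k⁻¹ e over e ∈ {e_1, …, e_d}; and G_{k+1} := BFGS(G_k, A, L_kᵀ ũ_k). Then for every k ≥ 0: G_k ⪰ A and σ_A(G_k) ≤ (1 − 1/d)^k · σ_A(G_0). -/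
open Matrix

/-- `σ_A(G) = tr((G - A) A⁻¹)`. -/
noncomputable def sigmaA {d : ℕ} (A G : Matrix (Fin d) (Fin d) ℝ) : ℝ :=
  ((G - A) * A⁻¹).trace

/-- The BFGS quasi-Newton update. -/
noncomputable def BFGS {d : ℕ} (G A : Matrix (Fin d) (Fin d) ℝ) (u : Fin d → ℝ) :
    Matrix (Fin d) (Fin d) ℝ :=
  if u = 0 then G
  else G - (u ⬝ᵥ (G *ᵥ u))⁻¹ • vecMulVec (G *ᵥ u) (u ᵥ* G)
         + (u ⬝ᵥ (A *ᵥ u))⁻¹ • vecMulVec (A *ᵥ u) (u ᵥ* A)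

section Helpers

variable {d : ℕ}

lemma isHermitian_of_isSymm {M : Matrix (Fin d) (Fin d) ℝ} (h : M.IsSymm) : M.IsHermitian := by
  rwa [Matrix.IsHermitian, conjTranspose_eq_transpose_of_trivial]

lemma vecMulVec_mulVec' (v w x : Fin d → ℝ) : (vecMulVec v w) *ᵥ x = (w ⬝ᵥ x) • v := by
  ext i
  simp only [Matrix.mulVec, Matrix.vecMulVec_apply, dotProduct, Pi.smul_apply,
    smul_eq_mul, Finset.sum_mul]
  exact Finset.sum_congr rfl fun j _ => by ring

lemma trace_vecMulVec_mul (v w : Fin d → ℝ) (M : Matrix (Fin d) (Fin d) ℝ) :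
    (vecMulVec v w * M).trace = w ⬝ᵥ (M *ᵥ v) := by
  simp only [Matrix.trace, Matrix.diag, Matrix.mul_apply, Matrix.vecMulVec_apply,
    dotProduct, Matrix.mulVec, Finset.mul_sum]
  rw [Finset.sum_comm]
  exact Finset.sum_congr rfl fun j _ => Finset.sum_congr rfl fun i _ => by ring

lemma isSymm_vecMulVec_self (v : Fin d → ℝ) : (vecMulVec v v).IsSymm := by
  ext i j
  simp [Matrix.vecMulVec_apply, mul_comm]

lemma dot_symm {M : Matrix (Fin d) (Fin d) ℝ} (hM : M.IsSymm) (x y : Fin d → ℝ) :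
    x ⬝ᵥ (M *ᵥ y) = y ⬝ᵥ (M *ᵥ x) := by
  rw [Matrix.dotProduct_mulVec, ← Matrix.mulVec_transpose, hM, dotProduct_comm]

lemma vecMul_symm {M : Matrix (Fin d) (Fin d) ℝ} (hM : M.IsSymm) (x : Fin d → ℝ) :
    x ᵥ* M = M *ᵥ x := by
  rw [← Matrix.mulVec_transpose, hM]

lemma dot_mulVec_left (M : Matrix (Fin d) (Fin d) ℝ) (w v : Fin d → ℝ) :
    (M *ᵥ w) ⬝ᵥ v = w ⬝ᵥ (Mᵀ *ᵥ v) := by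
  rw [Matrix.dotProduct_mulVec w, Matrix.vecMul_transpose]

lemma bfgs_isSymm {A G : Matrix (Fin d) (Fin d) ℝ} (hAs : A.IsSymm) (hGs : G.IsSymm)
    (u : Fin d → ℝ) : (BFGS G A u).IsSymm := by
  unfold BFGS
  split
  · exact hGs
  · rw [vecMul_symm hGs, vecMul_symm hAs]
    exact (((hGs.sub ((isSymm_vecMulVec_self (G *ᵥ u)).smul _)).add
      ((isSymm_vecMulVec_self (A *ᵥ u)).smul _)))

lemma bfgs_psd {A G : Matrix (Fin d) (Fin d) ℝ} (hA : A.PosDef) (hAs : A.IsSymm)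
    (hGs : G.IsSymm) (hGA : (G - A).PosSemidef) (u : Fin d → ℝ) :
    (BFGS G A u - A).PosSemidef := by
  have hGpd : G.PosDef := by
    have := hA.add_posSemidef hGA
    rwa [add_sub_cancel] at this
  refine Matrix.PosSemidef.of_dotProduct_mulVec_nonneg ?_ ?_
  · exact isHermitian_of_isSymm (((bfgs_isSymm hAs hGs u).sub hAs))
  intro x
  rw [star_trivial]
  by_cases hu : u = 0
  · simpa [BFGS, hu] using hGA.dotProduct_mulVec_nonneg x
  unfold BFGS
  rw [if_neg hu]
  set q : ℝ := u ⬝ᵥ (G *ᵥ u) with hqdef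
  set a : ℝ := u ⬝ᵥ (A *ᵥ u) with hadef
  have hq : 0 < q := by simpa using hGpd.dotProduct_mulVec_pos hu
  have ha : 0 < a := by simpa using hA.dotProduct_mulVec_pos hu
  set p : ℝ := x ⬝ᵥ (G *ᵥ u) with hpdef
  set b : ℝ := x ⬝ᵥ (A *ᵥ u) with hbdef
  have hform : x ⬝ᵥ ((G - q⁻¹ • vecMulVec (G *ᵥ u) (u ᵥ* G)
      + a⁻¹ • vecMulVec (A *ᵥ u) (u ᵥ* A) - A) *ᵥ x)
      = x ⬝ᵥ ((G - A) *ᵥ x) - q⁻¹ * p ^ 2 + a⁻¹ * b ^ 2 := by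
    rw [vecMul_symm hGs, vecMul_symm hAs]
    simp only [Matrix.sub_mulVec, Matrix.add_mulVec, Matrix.smul_mulVec,
      vecMulVec_mulVec', dotProduct_sub, dotProduct_add,
      dotProduct_smul, smul_eq_mul, smul_smul]
    rw [hpdef, hbdef, dotProduct_comm (G *ᵥ u) x, dotProduct_comm (A *ᵥ u) x]
    ring
  rw [hform]
  set c : ℝ := p / q with hcdef
  set y : Fin d → ℝ := x - c • u with hydef
  have hSsymm : (G - A).IsSymm := hGs.sub hAs
  have hxSu : x ⬝ᵥ ((G - A) *ᵥ u) = p - b := by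
    rw [Matrix.sub_mulVec, dotProduct_sub]
  have huSu : u ⬝ᵥ ((G - A) *ᵥ u) = q - a := by
    rw [Matrix.sub_mulVec, dotProduct_sub]
  have hy : y ⬝ᵥ ((G - A) *ᵥ y)
      = x ⬝ᵥ ((G - A) *ᵥ x) - 2 * c * (p - b) + c ^ 2 * (q - a) := by
    rw [hydef]
    simp only [Matrix.mulVec_sub, Matrix.mulVec_smul, dotProduct_sub,
      sub_dotProduct, smul_dotProduct, dotProduct_smul, smul_eq_mul]
    rw [dot_symm hSsymm u x, hxSu, huSu]
    ring
  have hy0 : 0 ≤ y ⬝ᵥ ((G - A) *ᵥ y) := by simpa using hGA.dotProduct_mulVec_nonneg y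
  rw [hy] at hy0
  have key : x ⬝ᵥ ((G - A) *ᵥ x) - q⁻¹ * p ^ 2 + a⁻¹ * b ^ 2
      = (x ⬝ᵥ ((G - A) *ᵥ x) - 2 * c * (p - b) + c ^ 2 * (q - a)) + a * (c - b / a) ^ 2 := by
    rw [hcdef]
    field_simp
    ring
  rw [key]
  have : 0 ≤ a * (c - b / a) ^ 2 := by positivity
  linarith

lemma sigma_bfgs {A G : Matrix (Fin d) (Fin d) ℝ} (hA : A.PosDef) (hAs : A.IsSymm)
    (hGs : G.IsSymm) (u : Fin d → ℝ) (hu : u ≠ 0) (hq : u ⬝ᵥ (G *ᵥ u) = 1) :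
    sigmaA A (BFGS G A u) = sigmaA A G + 1 - (G *ᵥ u) ⬝ᵥ (A⁻¹ *ᵥ (G *ᵥ u)) := by
  have hAdet : IsUnit A.det := hA.det_pos.ne'.isUnit
  have ha : u ⬝ᵥ (A *ᵥ u) ≠ 0 := (by simpa using hA.dotProduct_mulVec_pos hu : (0:ℝ) < u ⬝ᵥ (A *ᵥ u)).ne'
  unfold sigmaA BFGS
  rw [if_neg hu, hq, inv_one, one_smul, vecMul_symm hGs, vecMul_symm hAs]
  have : G - vecMulVec (G *ᵥ u) (G *ᵥ u) + (u ⬝ᵥ A *ᵥ u)⁻¹ • vecMulVec (A *ᵥ u) (A *ᵥ u) - A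
      = (G - A) - vecMulVec (G *ᵥ u) (G *ᵥ u)
        + (u ⬝ᵥ A *ᵥ u)⁻¹ • vecMulVec (A *ᵥ u) (A *ᵥ u) := by abel
  rw [this, Matrix.add_mul, Matrix.sub_mul, Matrix.trace_add, Matrix.trace_sub,
    Matrix.smul_mul, Matrix.trace_smul, trace_vecMulVec_mul, trace_vecMulVec_mul]
  have hAu : A⁻¹ *ᵥ (A *ᵥ u) = u := by
    rw [Matrix.mulVec_mulVec, Matrix.nonsing_inv_mul A hAdet, Matrix.one_mulVec]
  rw [hAu, dotProduct_comm (A *ᵥ u) u, smul_eq_mul, inv_mul_cancel₀ ha]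
  ring

end Helpers

/-- Greedy scaled BFGS updates:
`σ_A(G_k) ≤ (1 - 1/d)^k σ_A(G_0)`. -/
theorem greedy_BFGS_matrix_approximation
    {d : ℕ} {A : Matrix (Fin d) (Fin d) ℝ} (hA : A.PosDef) (hAsymm : A.IsSymm)
    {G₀ : Matrix (Fin d) (Fin d) ℝ} (hG₀symm : G₀.IsSymm) (hG₀ : (G₀ - A).PosSemidef)
    (G : ℕ → Matrix (Fin d) (Fin d) ℝ) (Lm : ℕ → Matrix (Fin d) (Fin d) ℝ) (i : ℕ → Fin d)
    (hGinit : G 0 = G₀)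
    (hLinv : ∀ k, IsUnit (Lm k))
    (hLG : ∀ k, (Lm k)ᵀ * Lm k = (G k)⁻¹)
    (hgreedy : ∀ k, ∀ j : Fin d,
      Pi.single j 1 ⬝ᵥ ((((Lm k)⁻¹)ᵀ * A⁻¹ * (Lm k)⁻¹) *ᵥ Pi.single j 1) ≤
        Pi.single (i k) 1 ⬝ᵥ ((((Lm k)⁻¹)ᵀ * A⁻¹ * (Lm k)⁻¹) *ᵥ Pi.single (i k) 1))
    (hGrec : ∀ k, G (k + 1) = BFGS (G k) A ((Lm k)ᵀ *ᵥ Pi.single (i k) 1)) :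
    ∀ k : ℕ, (G k - A).PosSemidef ∧
      sigmaA A (G k) ≤ (1 - 1 / (d : ℝ)) ^ k * sigmaA A G₀ := by
  have hd : 0 < d := (i 0).pos
  have hdR : (0 : ℝ) < d := by exact_mod_cast hd
  have hnn : (0 : ℝ) ≤ 1 - 1 / (d : ℝ)  := by
    have h1 : 1 / (d : ℝ) ≤ 1 := by
      rw [div_le_one hdR]
      exact_mod_cast hd
    linarith
  have hAdet : IsUnit A.det := hA.det_pos.ne'.isUnit
  suffices H : ∀ k, (G k).IsSymm ∧ (G k - A).PosSemidef ∧
      sigmaA A (G k) ≤ (1 - 1 / (d : ℝ)) ^ k * sigmaA A G₀ by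
    exact fun k => ⟨(H k).2.1, (H k).2.2⟩
  intro k
  induction k with
  | zero => exact ⟨hGinit ▸ hG₀symm, hGinit ▸ hG₀, by rw [hGinit, pow_zero, one_mul]⟩
  | succ k ih =>
    obtain ⟨hsym, hpsd, hσ⟩ := ih
    have hGpd : (G k).PosDef := by
      have := hA.add_posSemidef hpsd
      rwa [add_sub_cancel] at this
    have hGdet : IsUnit (G k).det := hGpd.det_pos.ne'.isUnit
    have hLdet : IsUnit (Lm k).det := (Matrix.isUnit_iff_isUnit_det (Lm k)).mp (hLinv k)
    have hLTdet : IsUnit (Lm k)ᵀ.det := by rwa [Matrix.det_transpose]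
    set L := Lm k with hLdef
    set e : Fin d → ℝ := Pi.single (i k) 1 with hedef
    set u : Fin d → ℝ := Lᵀ *ᵥ e with hudef
    have hGinv : G k = L⁻¹ * (Lᵀ)⁻¹ := by
      have h2 : ((G k)⁻¹)⁻¹ = G k := Matrix.nonsing_inv_nonsing_inv _ hGdet
      rw [← hLG k, Matrix.mul_inv_rev] at h2
      exact h2.symm
    have hGLT : G k * Lᵀ = L⁻¹ := by
      rw [hGinv, mul_assoc, Matrix.nonsing_inv_mul _ hLTdet, mul_one]
    have hGu : G k *ᵥ u = L⁻¹ *ᵥ e := by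
      rw [hudef, Matrix.mulVec_mulVec, hGLT]
    have hq : u ⬝ᵥ (G k *ᵥ u) = 1 := by
      rw [hGu, hudef, Matrix.mulVec_transpose, ← Matrix.dotProduct_mulVec,
        Matrix.mulVec_mulVec, Matrix.mul_nonsing_inv _ hLdet, Matrix.one_mulVec, hedef]
      simp [single_dotProduct]
    have hu : u ≠ 0 := by
      intro h
      rw [h] at hq
      simp at hq
    -- the greedy quantity
    set t : ℝ := (G k *ᵥ u) ⬝ᵥ (A⁻¹ *ᵥ (G k *ᵥ u)) with htdef
    have ht : t = e ⬝ᵥ ((L⁻¹ᵀ * A⁻¹ * L⁻¹) *ᵥ e) := by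
      rw [htdef, hGu, dot_mulVec_left, Matrix.mulVec_mulVec, Matrix.mulVec_mulVec]
    -- trace identity
    have htrace : (L⁻¹ᵀ * A⁻¹ * L⁻¹).trace = sigmaA A (G k) + d := by
      have h1 : (L⁻¹ᵀ * A⁻¹ * L⁻¹).trace = (G k * A⁻¹).trace := by
        rw [Matrix.trace_mul_cycle, Matrix.transpose_nonsing_inv,
          ← Matrix.mul_inv_rev, hLG k, Matrix.nonsing_inv_nonsing_inv _ hGdet]
      have h2 : sigmaA A (G k) = (G k * A⁻¹).trace - d := by
        rw [sigmaA, Matrix.sub_mul, Matrix.trace_sub, Matrix.mul_nonsing_inv _ hAdet,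
          Matrix.trace_one]
        simp
      rw [h1, h2]
      ring
    -- greedy bound : trace ≤ d * t
    have hsum : (L⁻¹ᵀ * A⁻¹ * L⁻¹).trace ≤ d * t := by
      have hdiag : ∀ j : Fin d, (L⁻¹ᵀ * A⁻¹ * L⁻¹) j j
          = Pi.single j 1 ⬝ᵥ ((L⁻¹ᵀ * A⁻¹ * L⁻¹) *ᵥ Pi.single j 1) := fun j => by
        simp [Matrix.mulVec_single, single_dotProduct]
      calc (L⁻¹ᵀ * A⁻¹ * L⁻¹).trace
          = ∑ j : Fin d, Pi.single j 1 ⬝ᵥ ((L⁻¹ᵀ * A⁻¹ * L⁻¹) *ᵥ Pi.single j 1) := by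
            rw [Matrix.trace]
            exact Finset.sum_congr rfl fun j _ => hdiag j
        _ ≤ ∑ _j : Fin d, t := by
            refine Finset.sum_le_sum fun j _ => ?_
            rw [ht]
            exact hgreedy k j
        _ = d * t := by
            rw [Finset.sum_const, Finset.card_univ, Fintype.card_fin, nsmul_eq_mul]
    -- one-step decrease
    have step : sigmaA A (G (k + 1)) ≤ (1 - 1 / (d : ℝ)) * sigmaA A (G k) := by
      rw [hGrec k, ← hudef, sigma_bfgs hA hAsymm hsym u hu hq, ← htdef]
      have h1 : sigmaA A (G k) + (d : ℝ) ≤ d * t := htrace ▸ hsum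
      have h2 : (sigmaA A (G k) + (d : ℝ)) / d ≤ t := by
        rw [div_le_iff₀ hdR]
        linarith
      have h3 : (sigmaA A (G k) + (d : ℝ)) / d = sigmaA A (G k) / d + 1 := by
        field_simp
      have h4 : (1 - 1 / (d : ℝ)) * sigmaA A (G k)
          = sigmaA A (G k) - sigmaA A (G k) / d := by ring
      linarith
    refine ⟨?_, ?_, ?_⟩
    · rw [hGrec k]
      exact bfgs_isSymm hAsymm hsym _
    · rw [hGrec k]
      exact bfgs_psd hA hAsymm hsym hpsd _
    · calc sigmaA A (G (k + 1)) ≤ (1 - 1 / (d : ℝ)) * sigmaA A (G k) := step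
        _ ≤ (1 - 1 / (d : ℝ)) * ((1 - 1 / (d : ℝ)) ^ k * sigmaA A G₀) :=
            mul_le_mul_of_nonneg_left hσ hnn
        _ = (1 - 1 / (d : ℝ)) ^ (k + 1) * sigmaA A G₀ := by ring
end

section
/- Let A, G be real symmetric d×d matrices with 0 ≺ A ⪯ G, let u ∈ ℝ^d with Gu ≠ Au, and let τ ∈ ℝ. Then σ_A(Broyd_τ(G, A, u)) = σ_A(G) − [ τ · (uᵀ(G−A)u)/(uᵀ A u) + (1 − τ) · (uᵀ(G−A)A⁻¹(G−A)u)/(uᵀ(G−A)u) ]. -/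
open Matrix

/-- The Broyden family quasi-Newton update `Broyd_τ(G, A, u)`. -/
noncomputable def Broyd {d : ℕ} (τ : ℝ) (G A : Matrix (Fin d) (Fin d) ℝ) (u : Fin d → ℝ) :
    Matrix (Fin d) (Fin d) ℝ :=
  if G *ᵥ u = A *ᵥ u then G
  else
    τ • (G - (u ⬝ᵥ (A *ᵥ u))⁻¹ •
            (vecMulVec (A *ᵥ u) (u ᵥ* G) + vecMulVec (G *ᵥ u) (u ᵥ* A))
          + ((u ⬝ᵥ (G *ᵥ u)) / (u ⬝ᵥ (A *ᵥ u)) + 1) •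
            ((u ⬝ᵥ (A *ᵥ u))⁻¹ • vecMulVec (A *ᵥ u) (u ᵥ* A)))
      + (1 - τ) • (G - (u ⬝ᵥ ((G - A) *ᵥ u))⁻¹ •
            vecMulVec ((G - A) *ᵥ u) (u ᵥ* (G - A)))

lemma trace_vmv {d : ℕ} (a b : Fin d → ℝ) (M : Matrix (Fin d) (Fin d) ℝ) :
    (vecMulVec a b * M).trace = b ⬝ᵥ (M *ᵥ a) := by
  simp only [Matrix.trace, Matrix.diag_apply, Matrix.mul_apply, vecMulVec_apply, dotProduct,
    mulVec]
  rw [Finset.sum_comm]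
  refine Finset.sum_congr rfl fun j _ => ?_
  simp only [dotProduct, Finset.mul_sum]
  refine Finset.sum_congr rfl fun i _ => ?_
  ring

/-- Exact one-step decrease of `σ_A` under the Broyden family update. -/
theorem sigma_broyden_one_step
    {d : ℕ} {A G : Matrix (Fin d) (Fin d) ℝ}
    (hA : A.PosDef) (hAsymm : A.IsSymm) (hGsymm : G.IsSymm) (hGA : (G - A).PosSemidef)
    {u : Fin d → ℝ} (hu : G *ᵥ u ≠ A *ᵥ u) (τ : ℝ) :
    sigmaA A (Broyd τ G A u) =
      sigmaA A G -
        (τ * (u ⬝ᵥ ((G - A) *ᵥ u)) / (u ⬝ᵥ (A *ᵥ u)) +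
          (1 - τ) * (u ⬝ᵥ ((G - A) *ᵥ (A⁻¹ *ᵥ ((G - A) *ᵥ u)))) / (u ⬝ᵥ ((G - A) *ᵥ u))) := by
  have hu0 : u ≠ 0 := by
    rintro rfl; simp at hu
  have hdet : IsUnit A.det := isUnit_iff_ne_zero.mpr hA.det_pos.ne'
  have hAinv : A⁻¹ * A = 1 := nonsing_inv_mul A hdet
  have hiA : ∀ v, A⁻¹ *ᵥ (A *ᵥ v) = v := fun v => by
    rw [mulVec_mulVec, hAinv, one_mulVec]
  have hGs : u ᵥ* G = G *ᵥ u := by rw [← mulVec_transpose, hGsymm]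
  have hAs : u ᵥ* A = A *ᵥ u := by rw [← mulVec_transpose, hAsymm]
  have hEs : u ᵥ* (G - A) = (G - A) *ᵥ u := by
    rw [← mulVec_transpose, transpose_sub, hGsymm, hAsymm]
  have hAis : (A⁻¹)ᵀ = A⁻¹ := by rw [transpose_nonsing_inv, hAsymm]
  have hiAs : ∀ v, v ᵥ* A⁻¹ = A⁻¹ *ᵥ v := fun v => by
    rw [← mulVec_transpose, hAis]
  have hs : (0:ℝ) < u ⬝ᵥ (A *ᵥ u) := by
    have := hA.dotProduct_mulVec_pos hu0; simpa using this
  have hEu : (G - A) *ᵥ u ≠ 0 := by rw [sub_mulVec, sub_ne_zero]; exact hu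
  have he : (0:ℝ) < u ⬝ᵥ ((G - A) *ᵥ u) := by
    refine lt_of_le_of_ne (by simpa using hGA.dotProduct_mulVec_nonneg u) fun h => hEu ?_
    exact (hGA.dotProduct_mulVec_zero_iff u).mp (by simpa using h.symm)
  rw [sigmaA, sigmaA, Broyd, if_neg hu]
  simp only [sub_mul, add_mul, Matrix.smul_mul, trace_add, trace_sub, trace_smul, trace_vmv,
    smul_eq_mul]
  rw [hGs, hAs, hEs, hiA]
  rw [show (A *ᵥ u) ⬝ᵥ (A⁻¹ *ᵥ (G *ᵥ u)) = u ⬝ᵥ (G *ᵥ u) by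
    rw [dotProduct_mulVec, hiAs, hiA]]
  rw [show (G *ᵥ u) ⬝ᵥ u = u ⬝ᵥ (G *ᵥ u) from dotProduct_comm _ _]
  rw [show (A *ᵥ u) ⬝ᵥ u = u ⬝ᵥ (A *ᵥ u) from dotProduct_comm _ _]
  rw [show u ⬝ᵥ ((G - A) *ᵥ (A⁻¹ *ᵥ ((G - A) *ᵥ u)))
        = ((G - A) *ᵥ u) ⬝ᵥ (A⁻¹ *ᵥ ((G - A) *ᵥ u)) by
    rw [dotProduct_mulVec, hEs]]
  rw [show u ⬝ᵥ ((G - A) *ᵥ u) = u ⬝ᵥ (G *ᵥ u) - u ⬝ᵥ (A *ᵥ u) by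
    rw [sub_mulVec, dotProduct_sub]]
  have he' : u ⬝ᵥ (G *ᵥ u) - u ⬝ᵥ (A *ᵥ u) ≠ 0 := by
    rw [sub_mulVec, dotProduct_sub] at he; exact he.ne'
  field_simp
  ring
end
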